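/- Let m,n ≥ 1 be integers. The commutator subgroup of the structure group of the quandle U_{m,n} is a cyclic group of order gcd(m,n), i.e. isomorphic to ℤ/gcd(m,n). -/

import Mathlib

variable {X : Type*}

/-- The relators `g_a g_b (g_b g_{a ◁ b})⁻¹` of the structure group. -/
def structureRels (op : X → X → X) : Set (FreeGroup X) :=
  {w | ∃ a b : X,
    w = FreeGroup.of a * FreeGroup.of b * (FreeGroup.of b * FreeGroup.of (op a b))⁻¹}

/-- The structure group `⟨g_a, a ∈ X | g_a g_b = g_b g_{a ◁ b}⟩` of a quandle. -/
abbrev StructureGroup (op : X → X → X) : Type _ := PresentedGroup (structureRels op)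

/-- The quandle `U_{n_1,…,n_r}` on `ℤ/n_1 ⊔ ⋯ ⊔ ℤ/n_r`: `a ◁ b = a` if `a, b` lie in
the same summand and `a ◁ b = a + 1` otherwise. -/
def Uop {r : ℕ} (n : Fin r → ℕ) :
    (Σ i, ZMod (n i)) → (Σ i, ZMod (n i)) → (Σ i, ZMod (n i)) :=
  fun a b => if a.1 = b.1 then a else ⟨a.1, a.2 + 1⟩


set_option linter.unnecessarySeqFocus false
set_option linter.unusedSectionVars false

@[ext] structure Heis (d : ℕ) where
  a : ZMod d
  b : ZMod d
  c : ZMod d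

namespace Heis
variable {d : ℕ}

instance : Mul (Heis d) := ⟨fun p q => ⟨p.a + q.a, p.b + q.b, p.c + q.c + p.b * q.a⟩⟩
instance : One (Heis d) := ⟨⟨0, 0, 0⟩⟩
instance : Inv (Heis d) := ⟨fun p => ⟨-p.a, -p.b, -p.c + p.a * p.b⟩⟩

@[simp] lemma mul_a (p q : Heis d) : (p * q).a = p.a + q.a := rfl
@[simp] lemma mul_b (p q : Heis d) : (p * q).b = p.b + q.b := rfl
@[simp] lemma mul_c (p q : Heis d) : (p * q).c = p.c + q.c + p.b * q.a := rfl
@[simp] lemma one_a : (1 : Heis d).a = 0 := rfl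
@[simp] lemma one_b : (1 : Heis d).b = 0 := rfl
@[simp] lemma one_c : (1 : Heis d).c = 0 := rfl
@[simp] lemma inv_a (p : Heis d) : (p⁻¹).a = -p.a := rfl
@[simp] lemma inv_b (p : Heis d) : (p⁻¹).b = -p.b := rfl
@[simp] lemma inv_c (p : Heis d) : (p⁻¹).c = -p.c + p.a * p.b := rfl

instance : Group (Heis d) where
  mul_assoc p q r := by ext <;> simp <;> ring
  one_mul p := by ext <;> simp
  mul_one p := by ext <;> simp
  inv_mul_cancel p := by ext <;> simp <;> ring

lemma zpow_c (t : ZMod d) : ∀ k : ℕ, (⟨0, 0, t⟩ : Heis d) ^ k = ⟨0, 0, k * t⟩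
  | 0 => by ext <;> simp
  | k + 1 => by rw [pow_succ, zpow_c t k]; ext <;> simp <;> ring

end Heis

section helpers
variable {G : Type*} [Group G]

private lemma keyA {a b c : G} (h : a * b = b * c) : b⁻¹ * a = c * b⁻¹ := by
  rw [inv_mul_eq_iff_eq_mul, ← mul_assoc, ← h, mul_assoc, mul_inv_cancel, mul_one]

private lemma keyB {a b c : G} (h : a * b = b * c) : c = b⁻¹ * (a * b) := by
  rw [h, inv_mul_cancel_left]

private lemma keyD {a b t : G} (h : Commute a b) : b * (a * t) = a * (b * t) := by
  rw [← mul_assoc, ← h.eq, mul_assoc]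

end helpers

namespace UmnProof

variable (m n : ℕ)

abbrev XX := Σ i : Fin 2, ZMod (![m, n] i)

abbrev GG := StructureGroup (Uop ![m, n])

def gg : XX m n → GG m n := PresentedGroup.of

def xg (u : ZMod m) : GG m n := gg m n ⟨0, u⟩
def yg (v : ZMod n) : GG m n := gg m n ⟨1, v⟩

variable {m n}

lemma sigmaCases (P : XX m n → Prop) (h0 : ∀ u : ZMod m, P ⟨0, u⟩)
    (h1 : ∀ v : ZMod n, P ⟨1, v⟩) : ∀ p, P p := by
  rintro ⟨⟨(_ | _ | i), hi⟩, u⟩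
  · exact h0 u
  · exact h1 u
  · omega

lemma hrel (a b : XX m n) : gg m n a * gg m n b = gg m n b * gg m n (Uop ![m, n] a b) := by
  have h : (PresentedGroup.mk (structureRels (Uop ![m, n]))
      (FreeGroup.of a * FreeGroup.of b *
        (FreeGroup.of b * FreeGroup.of (Uop ![m, n] a b))⁻¹) : GG m n) = 1 := by
    apply (QuotientGroup.eq_one_iff _).mpr
    exact Subgroup.subset_normalClosure ⟨a, b, rfl⟩
  simp only [map_mul, map_inv] at h
  exact mul_inv_eq_one.mp h

lemma rel_xx (u u' : ZMod m) : xg m n u * xg m n u' = xg m n u' * xg m n u := by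
  simpa [Uop, xg, gg] using hrel (m := m) (n := n) ⟨0, u⟩ ⟨0, u'⟩

lemma rel_yy (v v' : ZMod n) : yg m n v * yg m n v' = yg m n v' * yg m n v := by
  simpa [Uop, yg, gg] using hrel (m := m) (n := n) ⟨1, v⟩ ⟨1, v'⟩

lemma rel_xy (u : ZMod m) (v : ZMod n) :
    xg m n u * yg m n v = yg m n v * xg m n (u + 1) := by
  exact hrel (m := m) (n := n) ⟨0, u⟩ ⟨1, v⟩

lemma rel_yx (v : ZMod n) (u : ZMod m) :
    yg m n v * xg m n u = xg m n u * yg m n (v + 1) := by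
  exact hrel (m := m) (n := n) ⟨1, v⟩ ⟨0, u⟩

end UmnProof

namespace UmnProof
variable {m n : ℕ}

noncomputable def zz (m n : ℕ) : GG m n := xg m n 1 * (xg m n 0)⁻¹
noncomputable def ww (m n : ℕ) : GG m n := yg m n 1 * (yg m n 0)⁻¹

lemma hzy (v : ZMod n) : Commute (zz m n) (yg m n v) := by
  have h1 := rel_yx (m := m) (n := n) v 1
  have h2 := rel_yx (m := m) (n := n) v 0
  show zz m n * yg m n v = yg m n v * zz m n
  calc zz m n * yg m n v = xg m n 1 * ((xg m n 0)⁻¹ * yg m n v) := by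
        rw [zz, mul_assoc]
    _ = xg m n 1 * (yg m n (v + 1) * (xg m n 0)⁻¹) := by rw [keyA h2]
    _ = (yg m n v * xg m n 1) * (xg m n 0)⁻¹ := by rw [← mul_assoc, ← h1]
    _ = yg m n v * zz m n := by rw [zz, mul_assoc]

lemma hwx (u : ZMod m) : Commute (ww m n) (xg m n u) := by
  have h1 := rel_xy (m := m) (n := n) u 1
  have h2 := rel_xy (m := m) (n := n) u 0
  show ww m n * xg m n u = xg m n u * ww m n
  calc ww m n * xg m n u = yg m n 1 * ((yg m n 0)⁻¹ * xg m n u) := by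
        rw [ww, mul_assoc]
    _ = yg m n 1 * (xg m n (u + 1) * (yg m n 0)⁻¹) := by rw [keyA h2]
    _ = (xg m n u * yg m n 1) * (yg m n 0)⁻¹ := by rw [← mul_assoc, ← h1]
    _ = xg m n u * ww m n := by rw [ww, mul_assoc]

lemma hzx (u : ZMod m) : Commute (zz m n) (xg m n u) := by
  have h1 : Commute (xg m n 1) (xg m n u) := rel_xx 1 u
  have h2 : Commute (xg m n 0) (xg m n u) := rel_xx 0 u
  exact h1.mul_left h2.inv_left

lemma hwy (v : ZMod n) : Commute (ww m n) (yg m n v) := by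
  have h1 : Commute (yg m n 1) (yg m n v) := rel_yy 1 v
  have h2 : Commute (yg m n 0) (yg m n v) := rel_yy 0 v
  exact h1.mul_left h2.inv_left

lemma z_central (h : GG m n) : Commute (zz m n) h := by
  have hgen : ∀ p : XX m n, Commute (zz m n) (gg m n p) :=
    sigmaCases _ (fun u => hzx u) (fun v => hzy v)
  have hmem : h ∈ Subgroup.closure (Set.range (gg m n)) := by
    rw [gg, PresentedGroup.closure_range_of]; trivial
  induction hmem using Subgroup.closure_induction with
  | mem x hx => obtain ⟨p, rfl⟩ := hx; exact hgen p
  | one => exact Commute.one_right _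
  | mul x y _ _ hx hy => exact hx.mul_right hy
  | inv x _ hx => exact hx.inv_right

lemma hx1 : xg m n 1 = zz m n * xg m n 0 := by
  rw [zz, inv_mul_cancel_right]

lemma hy1 : yg m n 1 = ww m n * yg m n 0 := by
  rw [ww, inv_mul_cancel_right]

lemma stepX : ∀ k : ℕ, xg m n ((k : ZMod m) + 1) = zz m n * xg m n (k : ZMod m) := by
  intro k
  induction k with
  | zero => simpa using hx1 (m := m) (n := n)
  | succ k ih =>
    have e1 := rel_xy (m := m) (n := n) ((k : ZMod m) + 1) 0
    have e0 := rel_xy (m := m) (n := n) (k : ZMod m) 0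
    push_cast
    calc xg m n ((k : ZMod m) + 1 + 1)
        = (yg m n 0)⁻¹ * (xg m n ((k : ZMod m) + 1) * yg m n 0) := keyB e1
      _ = (yg m n 0)⁻¹ * (zz m n * (xg m n (k : ZMod m) * yg m n 0)) := by
          rw [ih, mul_assoc]
      _ = zz m n * ((yg m n 0)⁻¹ * (xg m n (k : ZMod m) * yg m n 0)) :=
          keyD (hzy 0).inv_right
      _ = zz m n * xg m n ((k : ZMod m) + 1) := by rw [← keyB e0]

lemma stepY : ∀ k : ℕ, yg m n ((k : ZMod n) + 1) = ww m n * yg m n (k : ZMod n) := by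
  intro k
  induction k with
  | zero => simpa using hy1 (m := m) (n := n)
  | succ k ih =>
    have e1 := rel_yx (m := m) (n := n) ((k : ZMod n) + 1) 0
    have e0 := rel_yx (m := m) (n := n) (k : ZMod n) 0
    push_cast
    calc yg m n ((k : ZMod n) + 1 + 1)
        = (xg m n 0)⁻¹ * (yg m n ((k : ZMod n) + 1) * xg m n 0) := keyB e1
      _ = (xg m n 0)⁻¹ * (ww m n * (yg m n (k : ZMod n) * xg m n 0)) := by
          rw [ih, mul_assoc]
      _ = ww m n * ((xg m n 0)⁻¹ * (yg m n (k : ZMod n) * xg m n 0)) :=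
          keyD (hwx 0).inv_right
      _ = ww m n * yg m n ((k : ZMod n) + 1) := by rw [← keyB e0]

lemma powX : ∀ k : ℕ, xg m n (k : ZMod m) = zz m n ^ k * xg m n 0 := by
  intro k
  induction k with
  | zero => simp
  | succ k ih =>
    have := stepX (m := m) (n := n) k
    push_cast
    rw [this, ih, ← mul_assoc, ← pow_succ']

lemma powY : ∀ k : ℕ, yg m n (k : ZMod n) = ww m n ^ k * yg m n 0 := by
  intro k
  induction k with
  | zero => simp
  | succ k ih =>
    have := stepY (m := m) (n := n) k
    push_cast
    rw [this, ih, ← mul_assoc, ← pow_succ']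

lemma zpowm : zz m n ^ m = 1 := by
  have h := powX (m := m) (n := n) m
  rw [ZMod.natCast_self] at h
  have h2 : zz m n ^ m * xg m n 0 = 1 * xg m n 0 := by rw [← h, one_mul]
  exact mul_right_cancel h2

lemma wpown : ww m n ^ n = 1 := by
  have h := powY (m := m) (n := n) n
  rw [ZMod.natCast_self] at h
  have h2 : ww m n ^ n * yg m n 0 = 1 * yg m n 0 := by rw [← h, one_mul]
  exact mul_right_cancel h2

lemma w_eq_zinv : ww m n = (zz m n)⁻¹ := by
  have e1 : xg m n 0 * yg m n 0 = zz m n * (ww m n * (xg m n 0 * yg m n 0)) := by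
    have r1 : xg m n 0 * yg m n 0 = yg m n 0 * xg m n 1 := by
      simpa using rel_xy (m := m) (n := n) 0 0
    have r2 : yg m n 0 * xg m n 0 = xg m n 0 * yg m n 1 := by
      simpa using rel_yx (m := m) (n := n) 0 0
    calc xg m n 0 * yg m n 0 = yg m n 0 * xg m n 1 := r1
      _ = yg m n 0 * (zz m n * xg m n 0) := by rw [hx1]
      _ = zz m n * (yg m n 0 * xg m n 0) := keyD (hzy 0)
      _ = zz m n * (xg m n 0 * yg m n 1) := by rw [r2]
      _ = zz m n * (xg m n 0 * (ww m n * yg m n 0)) := by rw [hy1]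
      _ = zz m n * (ww m n * (xg m n 0 * yg m n 0)) := by
          rw [keyD (hwx 0)]
  have e2 : (1 : GG m n) * (xg m n 0 * yg m n 0)
      = zz m n * ww m n * (xg m n 0 * yg m n 0) := by
    rw [one_mul, mul_assoc]; exact e1
  have e3 : (1 : GG m n) = zz m n * ww m n := mul_right_cancel e2
  rw [eq_comm, inv_eq_iff_mul_eq_one, ← e3]

lemma zpown : zz m n ^ n = 1 := by
  have := wpown (m := m) (n := n)
  rw [w_eq_zinv, inv_pow, inv_eq_one] at this
  exact this

section withNeZero
variable [NeZero m] [NeZero n]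

lemma stepXAll (u : ZMod m) : xg m n (u + 1) = zz m n * xg m n u := by
  obtain ⟨k, rfl⟩ := ZMod.natCast_zmod_surjective u
  exact stepX k

lemma stepYAll (v : ZMod n) : yg m n (v + 1) = ww m n * yg m n v := by
  obtain ⟨k, rfl⟩ := ZMod.natCast_zmod_surjective v
  exact stepY k

end withNeZero

variable (m n) in
abbrev mkx (u : ZMod m) : XX m n := ⟨0, u⟩
variable (m n) in
abbrev mky (v : ZMod n) : XX m n := ⟨1, v⟩

variable (m n) in
def phi0 (d : ℕ) : XX m n → Heis d := fun p =>
  if p.1 = 0 then ⟨1, 0, -(p.2.val : ZMod d)⟩ else ⟨0, 1, (p.2.val : ZMod d)⟩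

lemma phi0_x (d : ℕ) (u : ZMod m) :
    phi0 m n d (mkx m n u) = ⟨1, 0, -(u.val : ZMod d)⟩ := rfl
lemma phi0_y (d : ℕ) (v : ZMod n) :
    phi0 m n d (mky m n v) = ⟨0, 1, (v.val : ZMod d)⟩ := rfl
lemma uop_xx (u u' : ZMod m) :
    Uop ![m, n] (mkx m n u) (mkx m n u') = mkx m n u := rfl
lemma uop_yy (v v' : ZMod n) :
    Uop ![m, n] (mky m n v) (mky m n v') = mky m n v := rfl
lemma uop_xy (u : ZMod m) (v : ZMod n) :
    Uop ![m, n] (mkx m n u) (mky m n v) = mkx m n (u + 1) := rfl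
lemma uop_yx (v : ZMod n) (u : ZMod m) :
    Uop ![m, n] (mky m n v) (mkx m n u) = mky m n (v + 1) := rfl

lemma castval {k d : ℕ} [NeZero k] (hdk : d ∣ k) (u : ZMod k) :
    (((u + 1).val : ZMod d)) = (u.val : ZMod d) + 1 := by
  have h : ∀ w : ZMod k, ((w.val : ℕ) : ZMod d) = ZMod.castHom hdk (ZMod d) w := by
    intro w; rw [ZMod.castHom_apply, ZMod.natCast_val]
  rw [h, h, map_add, map_one]

lemma castval_one {k d : ℕ} [NeZero k] (hdk : d ∣ k) :
    (((1 : ZMod k).val : ZMod d)) = 1 := by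
  have h : (((1 : ZMod k).val : ℕ) : ZMod d) = ZMod.castHom hdk (ZMod d) 1 := by
    rw [ZMod.castHom_apply, ZMod.natCast_val]
  rw [h, map_one]

variable [NeZero m] [NeZero n]

lemma phi_rels {d : ℕ} (hdm : d ∣ m) (hdn : d ∣ n) :
    ∀ r ∈ structureRels (Uop ![m, n]), FreeGroup.lift (phi0 m n d) r = 1 := by
  rintro r ⟨a, b, rfl⟩
  simp only [map_mul, map_inv, FreeGroup.lift_apply_of]
  rw [mul_inv_eq_one]
  revert b
  refine sigmaCases (fun a => ∀ b, phi0 m n d a * phi0 m n d b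
    = phi0 m n d b * phi0 m n d (Uop ![m, n] a b)) ?_ ?_ a
  · intro u
    refine sigmaCases _ ?_ ?_
    · intro u'
      rw [uop_xx, phi0_x, phi0_x]
      ext <;> simp <;> ring
    · intro v
      rw [uop_xy, phi0_x, phi0_y, phi0_x]
      ext <;> simp [castval hdm u] <;> ring
  · intro v
    refine sigmaCases _ ?_ ?_
    · intro u
      rw [uop_yx, phi0_y, phi0_x, phi0_y]
      ext <;> simp [castval hdn v] <;> ring
    · intro v'
      rw [uop_yy, phi0_y, phi0_y]
      ext <;> simp <;> ring

noncomputable def phi {d : ℕ} (hdm : d ∣ m) (hdn : d ∣ n) : GG m n →* Heis d :=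
  PresentedGroup.toGroup (phi_rels hdm hdn)

lemma phi_gen {d : ℕ} (hdm : d ∣ m) (hdn : d ∣ n) (p : XX m n) :
    phi hdm hdn (gg m n p) = phi0 m n d p :=
  PresentedGroup.toGroup.of _

lemma phi_z {d : ℕ} (hdm : d ∣ m) (hdn : d ∣ n) :
    phi hdm hdn (zz m n) = (⟨0, 0, -1⟩ : Heis d) := by
  have h1 : phi hdm hdn (xg m n 1) = (⟨1, 0, -1⟩ : Heis d) := by
    rw [show xg m n 1 = gg m n (mkx m n 1) from rfl, phi_gen, phi0_x, castval_one hdm]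
  have h0 : phi hdm hdn (xg m n 0) = (⟨1, 0, 0⟩ : Heis d) := by
    rw [show xg m n 0 = gg m n (mkx m n 0) from rfl, phi_gen, phi0_x]
    ext <;> simp [ZMod.val_zero]
  rw [zz, map_mul, map_inv, h1, h0]
  ext <;> simp <;> ring

lemma order_z (hm : 1 ≤ m) (hn : 1 ≤ n) : orderOf (zz m n) = Nat.gcd m n := by
  set d := Nat.gcd m n with hd
  haveI : NeZero d := ⟨fun h => by rw [hd, Nat.gcd_eq_zero_iff] at h; omega⟩
  have hdm : d ∣ m := Nat.gcd_dvd_left m n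
  have hdn : d ∣ n := Nat.gcd_dvd_right m n
  have dvd1 : orderOf (zz m n) ∣ d :=
    Nat.dvd_gcd (orderOf_dvd_of_pow_eq_one zpowm) (orderOf_dvd_of_pow_eq_one zpown)
  have dvd2 : d ∣ orderOf (zz m n) := by
    have h1 : phi hdm hdn (zz m n) ^ orderOf (zz m n) = 1 := by
      rw [← map_pow, pow_orderOf_eq_one, map_one]
    rw [phi_z hdm hdn, Heis.zpow_c] at h1
    have h2 := congrArg Heis.c h1
    simp only [Heis.one_c, mul_neg_one, neg_eq_zero] at h2
    exact (ZMod.natCast_eq_zero_iff _ d).mp h2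
  exact Nat.dvd_antisymm dvd1 dvd2

open scoped commutatorElement in
lemma z_in_commutator : zz m n ∈ commutator (GG m n) := by
  have r1 : xg m n 0 * yg m n 0 = yg m n 0 * xg m n 1 := by
    simpa using rel_xy (m := m) (n := n) 0 0
  have h1 : xg m n 1 = (yg m n 0)⁻¹ * (xg m n 0 * yg m n 0) := keyB r1
  have h2 : zz m n = ⁅(yg m n 0)⁻¹, xg m n 0⁆ := by
    rw [commutatorElement_def, zz, h1, inv_inv]; group
  rw [commutator_def, h2]
  exact Subgroup.commutator_mem_commutator (Subgroup.mem_top _) (Subgroup.mem_top _)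

lemma zpowers_normal : (Subgroup.zpowers (zz m n)).Normal := by
  constructor
  intro a ha g
  obtain ⟨k, hk⟩ := Subgroup.mem_zpowers_iff.mp ha
  subst hk
  have hc : Commute (zz m n ^ k) g := (z_central g).zpow_left k
  have : g * zz m n ^ k * g⁻¹ = zz m n ^ k := by
    rw [← hc.eq, mul_inv_cancel_right]
  exact Subgroup.mem_zpowers_iff.mpr ⟨k, this.symm⟩

open scoped commutatorElement in
lemma comm_eq : commutator (GG m n) = Subgroup.zpowers (zz m n) := by
  haveI := zpowers_normal (m := m) (n := n)
  refine le_antisymm ?_ (Subgroup.zpowers_le.mpr z_in_commutator)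
  set π := QuotientGroup.mk' (Subgroup.zpowers (zz m n)) with hπ
  have hπz : π (zz m n) = 1 := (QuotientGroup.eq_one_iff _).mpr (Subgroup.mem_zpowers _)
  have base : ∀ p q : XX m n, Commute (π (gg m n p)) (π (gg m n q)) := by
    have mixed : ∀ (u : ZMod m) (v : ZMod n),
        Commute (π (xg m n u)) (π (yg m n v)) := by
      intro u v
      have hst : xg m n u * yg m n v = zz m n * (yg m n v * xg m n u) := by
        rw [rel_xy u v, stepXAll u, keyD (hzy v)]
      show π (xg m n u) * π (yg m n v) = π (yg m n v) * π (xg m n u)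
      rw [← map_mul, hst, map_mul, hπz, one_mul, map_mul]
    refine sigmaCases _ ?_ ?_
    · intro u
      refine sigmaCases _ ?_ ?_
      · intro u'
        exact (show Commute (xg m n u) (xg m n u') from rel_xx u u').map π
      · intro v
        exact mixed u v
    · intro v
      refine sigmaCases _ ?_ ?_
      · intro u
        exact (mixed u v).symm
      · intro v'
        exact (show Commute (yg m n v) (yg m n v') from rel_yy v v').map π
  have allcomm : ∀ a b : GG m n, Commute (π a) (π b) := by
    have hcl : ∀ c : GG m n, c ∈ Subgroup.closure (Set.range (gg m n)) := by
      intro c; rw [gg, PresentedGroup.closure_range_of]; trivial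
    intro a b
    have ha := hcl a
    induction ha using Subgroup.closure_induction with
    | mem x hx =>
      have hb := hcl b
      induction hb using Subgroup.closure_induction with
      | mem y hy =>
        obtain ⟨p, rfl⟩ := hx
        obtain ⟨q, rfl⟩ := hy
        exact base p q
      | one => rw [map_one]; exact Commute.one_right _
      | mul y z _ _ hy hz => rw [map_mul]; exact hy.mul_right hz
      | inv y _ hy => rw [map_inv]; exact hy.inv_right
    | one => rw [map_one]; exact Commute.one_left _
    | mul x y _ _ hx hy => rw [map_mul]; exact hx.mul_left hy
    | inv x _ hx => rw [map_inv]; exact hx.inv_left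
  rw [commutator_def]
  refine Subgroup.commutator_le.mpr ?_
  intro g₁ _ g₂ _
  have h1 : π ⁅g₁, g₂⁆ = 1 := by
    rw [map_commutatorElement]
    exact commutatorElement_eq_one_iff_commute.mpr (allcomm g₁ g₂)
  exact (QuotientGroup.eq_one_iff _).mp h1

end UmnProof

/-- The commutator subgroup of the structure group of `U_{m,n}` is
cyclic of order `gcd(m,n)`. -/
theorem commutator_structureGroup_Umn (m n : ℕ) (hm : 1 ≤ m) (hn : 1 ≤ n) :
    Nonempty (Additive ↥(commutator (StructureGroup (Uop ![m, n]))) ≃+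
      ZMod (Nat.gcd m n)) := by
  haveI : NeZero m := ⟨by omega⟩
  haveI : NeZero n := ⟨by omega⟩
  have hcyc : IsCyclic ↥(Subgroup.zpowers (UmnProof.zz m n)) := by
    constructor
    refine ⟨⟨UmnProof.zz m n, Subgroup.mem_zpowers _⟩, ?_⟩
    rintro ⟨x, hx⟩
    obtain ⟨k, rfl⟩ := Subgroup.mem_zpowers_iff.mp hx
    refine ⟨k, ?_⟩
    ext
    simp
  have hcard : Nat.card ↥(Subgroup.zpowers (UmnProof.zz m n)) = Nat.gcd m n := by
    rw [Nat.card_zpowers, UmnProof.order_z hm hn]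
  have e1 : ↥(commutator (StructureGroup (Uop ![m, n])))
      ≃* ↥(Subgroup.zpowers (UmnProof.zz m n)) :=
    MulEquiv.subgroupCongr UmnProof.comm_eq
  have e2 : Multiplicative (ZMod (Nat.gcd m n))
      ≃* ↥(Subgroup.zpowers (UmnProof.zz m n)) :=
    hcard ▸ zmodCyclicMulEquiv hcyc
  exact ⟨MulEquiv.toAdditiveLeft (e1.trans e2.symm)⟩
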